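/- Let Λ be an H-comodule algebra, regarded as a left H*-module via h* ⇀ m = Σ m⁽⁰⁾ h*(m⁽¹⁾) where ρ(m) = Σ m⁽⁰⁾ ⊗ m⁽¹⁾. If A ⊆ Λ is a subalgebra, then the smallest H-subcomodule subalgebra of Λ containing A equals the subalgebra of Λ generated by the set S = { h* ⇀ a : a ∈ A, h* ∈ H* }. -/

import Mathlib

/-!
STATEMENT 8: Let `Λ` be an `H`-comodule algebra, a left `H^*`-module via
`f ⇀ m = ∑ m⁽⁰⁾ f(m⁽¹⁾)`.  If `A ⊆ Λ` is a subalgebra, then the smallest `H`-subcomodule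
subalgebra of `Λ` equals the subalgebra generated by
`S = { f ⇀ a : a ∈ A, f ∈ H^* }`.
-/

open TensorProduct

set_option synthInstance.maxHeartbeats 800000
set_option maxHeartbeats 1600000

noncomputable section

variable (k : Type*) [Field k] (H Λ : Type*) [Ring H] [HopfAlgebra k H] [Ring Λ] [Algebra k Λ]

/-- The left `H^*`-action `f ⇀ m = ∑ m⁽⁰⁾ f(m⁽¹⁾) = (I ⊗ f)(ρ m)` on an `H`-comodule `Λ`. -/
def dualAct (ρ : Λ →ₗ[k] Λ ⊗[k] H) (f : Module.Dual k H) (m : Λ) : Λ :=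
  (TensorProduct.rid k Λ) ((LinearMap.lTensor Λ f) (ρ m))

/-- A non-unital subalgebra `W ⊆ Λ` is an `H`-subcomodule subalgebra when `ρ(W) ⊆ W ⊗ H`. -/
def IsSubcomoduleSubalg (ρ : Λ →ₗ[k] Λ ⊗[k] H) (W : NonUnitalSubalgebra k Λ) : Prop :=
  ∀ w ∈ W, ρ w ∈ LinearMap.range (LinearMap.rTensor H (Submodule.subtype W.toSubmodule))

lemma coeff_eq {κ : Type*} [DecidableEq κ] (𝒞 : Module.Basis κ k H) (t : Λ ⊗[k] H) (i : κ) :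
    (TensorProduct.equivFinsuppOfBasisRight 𝒞) t i =
      TensorProduct.rid k Λ (LinearMap.lTensor Λ (𝒞.coord i) t) := by
  induction t using TensorProduct.induction_on with
  | zero => simp
  | tmul m h =>
      simp [TensorProduct.equivFinsuppOfBasisRight_apply_tmul_apply, Module.Basis.coord_apply]
  | add x y hx hy => simp [map_add, Finsupp.add_apply, hx, hy]

lemma mem_range_of_coeffs (V : Submodule k Λ) (t : Λ ⊗[k] H)
    (h : ∀ g : Module.Dual k H, TensorProduct.rid k Λ (LinearMap.lTensor Λ g t) ∈ V) :
    t ∈ LinearMap.range (LinearMap.rTensor H V.subtype) := by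
  haveI := Classical.decEq (Module.Basis.ofVectorSpaceIndex k H)
  set 𝒞 := Module.Basis.ofVectorSpace k H with h𝒞
  set c := (TensorProduct.equivFinsuppOfBasisRight (M := Λ) 𝒞) t with hcdef
  have hc : (c.sum fun i m ↦ m ⊗ₜ[k] 𝒞 i) = t := by
    rw [hcdef, ← TensorProduct.equivFinsuppOfBasisRight_symm_apply]
    exact (TensorProduct.equivFinsuppOfBasisRight 𝒞).symm_apply_apply t
  rw [← hc, Finsupp.sum]
  refine Submodule.sum_mem _ fun i _ => ?_
  have hci : c i ∈ V := by rw [hcdef, coeff_eq]; exact h _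
  exact ⟨(⟨c i, hci⟩ : V) ⊗ₜ[k] 𝒞 i, by simp⟩

lemma stepA (ρ : Λ →ₗ[k] Λ ⊗[k] H) (f : Module.Dual k H) (t : Λ ⊗[k] H) :
    ρ (TensorProduct.rid k Λ (LinearMap.lTensor Λ f t)) =
    TensorProduct.rid k (Λ ⊗[k] H)
      (LinearMap.lTensor (Λ ⊗[k] H) f (LinearMap.rTensor H ρ t)) := by
  induction t using TensorProduct.induction_on with
  | zero => simp
  | tmul m h => simp
  | add x y hx hy => simp [map_add, hx, hy]

lemma stepB (f g : Module.Dual k H) (u : Λ ⊗[k] (H ⊗[k] H)) :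
    TensorProduct.rid k Λ (LinearMap.lTensor Λ g
      (TensorProduct.rid k (Λ ⊗[k] H) (LinearMap.lTensor (Λ ⊗[k] H) f
        ((TensorProduct.assoc k Λ H H).symm u)))) =
    TensorProduct.rid k Λ
      (LinearMap.lTensor Λ ((LinearMap.mul' k k) ∘ₗ TensorProduct.map g f) u) := by
  induction u using TensorProduct.induction_on with
  | zero => simp
  | tmul m v =>
      induction v using TensorProduct.induction_on with
      | zero => simp
      | tmul h₁ h₂ => simp [smul_smul, mul_comm]
      | add x y hx hy => simp only [tmul_add, map_add, hx, hy]
  | add x y hx hy => simp [map_add, hx, hy]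

lemma range_mul_mem (B : NonUnitalSubalgebra k Λ) {s t : Λ ⊗[k] H}
    (hs : s ∈ LinearMap.range (LinearMap.rTensor H (Submodule.subtype B.toSubmodule)))
    (ht : t ∈ LinearMap.range (LinearMap.rTensor H (Submodule.subtype B.toSubmodule))) :
    s * t ∈ LinearMap.range (LinearMap.rTensor H (Submodule.subtype B.toSubmodule)) := by
  obtain ⟨s', rfl⟩ := hs
  obtain ⟨t', rfl⟩ := ht
  induction s' using TensorProduct.induction_on with
  | zero => rw [map_zero, zero_mul]; exact zero_mem _
  | tmul b h =>
      induction t' using TensorProduct.induction_on with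
      | zero => rw [map_zero, mul_zero]; exact zero_mem _
      | tmul b' h' =>
          have hb : (b : Λ) ∈ B := b.2
          have hb' : (b' : Λ) ∈ B := b'.2
          have hbb' : (b : Λ) * (b' : Λ) ∈ B := mul_mem hb hb'
          refine ⟨(⟨(b : Λ) * (b' : Λ), hbb'⟩ : B.toSubmodule) ⊗ₜ[k] (h * h'), ?_⟩
          simp [Algebra.TensorProduct.tmul_mul_tmul]
      | add x y hx hy => rw [map_add, mul_add]; exact add_mem hx hy
  | add x y hx hy => rw [map_add, add_mul]; exact add_mem hx hy

/-- **Lemma.**  Let `Λ` be an `H`-comodule algebra and `A ⊆ Λ` a subalgebra.  Then the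
subalgebra `B` generated by `S = H^* ⇀ A` is the smallest `H`-subcomodule subalgebra of `Λ`
containing `A`. -/
theorem subcomodule_subalgebra_generated
    (ρ : Λ →ₗ[k] Λ ⊗[k] H)
    -- `ρ` is an algebra homomorphism
    (hmul : ∀ x y : Λ, ρ (x * y) = ρ x * ρ y) (hone : ρ 1 = 1)
    -- comodule axioms
    (hcounit : ∀ x : Λ,
      (TensorProduct.rid k Λ) ((LinearMap.lTensor Λ Coalgebra.counit) (ρ x)) = x)
    (hcoassoc : ∀ x : Λ,
      (LinearMap.rTensor H ρ) (ρ x) =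
        (TensorProduct.assoc k Λ H H).symm ((LinearMap.lTensor Λ Coalgebra.comul) (ρ x)))
    -- a subalgebra `A ⊆ Λ`
    (A : NonUnitalSubalgebra k Λ) :
    -- `B`, the subalgebra generated by `S = H^* ⇀ A`:
    -- (i) contains `A`,
    (A : Set Λ) ⊆
      (NonUnitalAlgebra.adjoin k
        {x : Λ | ∃ (f : Module.Dual k H) (a : Λ), a ∈ A ∧ x = dualAct k H Λ ρ f a} :
          Set Λ) ∧
    -- (ii) is an `H`-subcomodule subalgebra,
    IsSubcomoduleSubalg k H Λ ρ
      (NonUnitalAlgebra.adjoin k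
        {x : Λ | ∃ (f : Module.Dual k H) (a : Λ), a ∈ A ∧ x = dualAct k H Λ ρ f a}) ∧
    -- (iii) and is contained in every `H`-subcomodule subalgebra containing `A`.
    (∀ W : NonUnitalSubalgebra k Λ, IsSubcomoduleSubalg k H Λ ρ W → (A : Set Λ) ⊆ W →
      NonUnitalAlgebra.adjoin k
        {x : Λ | ∃ (f : Module.Dual k H) (a : Λ), a ∈ A ∧ x = dualAct k H Λ ρ f a} ≤ W) := by
  refine ⟨?_, ?_, ?_⟩
  · -- (i)
    intro a ha
    exact NonUnitalAlgebra.subset_adjoin k ⟨Coalgebra.counit, a, ha, (hcounit a).symm⟩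
  · -- (ii)
    intro w hw
    induction hw using NonUnitalAlgebra.adjoin_induction with
    | mem x hx =>
        obtain ⟨f, a, ha, rfl⟩ := hx
        apply mem_range_of_coeffs
        intro g
        have key : TensorProduct.rid k Λ (LinearMap.lTensor Λ g (ρ (dualAct k H Λ ρ f a))) =
            dualAct k H Λ ρ
              (((LinearMap.mul' k k) ∘ₗ TensorProduct.map g f) ∘ₗ Coalgebra.comul) a := by
          simp only [dualAct]
          rw [stepA k H Λ ρ f (ρ a), hcoassoc a, stepB,
            ← LinearMap.lTensor_comp_apply]
        rw [key]
        exact NonUnitalAlgebra.subset_adjoin k ⟨_, a, ha, rfl⟩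
    | add x y hx hy hx' hy' => rw [map_add]; exact add_mem hx' hy'
    | zero => rw [map_zero]; exact zero_mem _
    | mul x y hx hy hx' hy' => rw [hmul]; exact range_mul_mem k H Λ _ hx' hy'
    | smul r x hx hx' => rw [map_smul]; exact Submodule.smul_mem _ _ hx'
  · -- (iii)
    intro W hW hAW
    apply NonUnitalAlgebra.adjoin_le
    rintro x ⟨f, a, ha, rfl⟩
    obtain ⟨t, ht⟩ := hW a (hAW ha)
    show dualAct k H Λ ρ f a ∈ W
    simp only [dualAct]
    rw [← ht]
    clear ht
    induction t using TensorProduct.induction_on with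
    | zero => rw [map_zero, map_zero, map_zero]; exact zero_mem W
    | tmul w h =>
        simp only [LinearMap.rTensor_tmul, Submodule.coe_subtype, LinearMap.lTensor_tmul,
          TensorProduct.rid_tmul]
        exact SMulMemClass.smul_mem _ w.2
    | add x y hx hy => rw [map_add, map_add, map_add]; exact add_mem hx hy

end
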